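/- For any real numbers b, c with b^2 + 4c > 0 and any integer k ≥ 0, the sum over i from 0 to ⌊k/2⌋ of C(k-i, i) · b^(k-2i) · c^i equals (1/√(b²+4c)) · ( ((b + √(b²+4c))/2)^(k+1) − ((b − √(b²+4c))/2)^(k+1) ). -/

import Mathlib

lemma sum_rec (b c : ℝ) (k : ℕ) :
    ∑ i ∈ Finset.range ((k + 2) / 2 + 1), (Nat.choose (k + 2 - i) i : ℝ) * b ^ (k + 2 - 2 * i) * c ^ i
      = b * ∑ i ∈ Finset.range ((k + 1) / 2 + 1), (Nat.choose (k + 1 - i) i : ℝ) * b ^ (k + 1 - 2 * i) * c ^ i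
      + c * ∑ i ∈ Finset.range (k / 2 + 1), (Nat.choose (k - i) i : ℝ) * b ^ (k - 2 * i) * c ^ i := by
  have h2 : (k + 2) / 2 + 1 = (k / 2 + 1) + 1 := by omega
  rw [h2, Finset.sum_range_succ']
  have hL : ∀ i ∈ Finset.range (k / 2 + 1),
      (Nat.choose (k + 2 - (i + 1)) (i + 1) : ℝ) * b ^ (k + 2 - 2 * (i + 1)) * c ^ (i + 1)
        = (Nat.choose (k - i) (i + 1) : ℝ) * b ^ (k - 2 * i) * c ^ (i + 1)
          + (Nat.choose (k - i) i : ℝ) * b ^ (k - 2 * i) * c ^ (i + 1) := by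
    intro i hi
    rw [Finset.mem_range] at hi
    have h1 : k + 2 - (i + 1) = (k - i) + 1 := by omega
    have h3 : k + 2 - 2 * (i + 1) = k - 2 * i := by omega
    rw [h1, h3, Nat.choose_succ_succ]
    push_cast
    ring
  rw [Finset.sum_congr rfl hL, Finset.sum_add_distrib]
  have hC : c * ∑ i ∈ Finset.range (k / 2 + 1), (Nat.choose (k - i) i : ℝ) * b ^ (k - 2 * i) * c ^ i
      = ∑ i ∈ Finset.range (k / 2 + 1), (Nat.choose (k - i) i : ℝ) * b ^ (k - 2 * i) * c ^ (i + 1) := by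
    rw [Finset.mul_sum]
    exact Finset.sum_congr rfl fun i _ => by ring
  have hA : ∑ i ∈ Finset.range (k / 2 + 1), (Nat.choose (k - i) (i + 1) : ℝ) * b ^ (k - 2 * i) * c ^ (i + 1)
      = ∑ i ∈ Finset.range ((k + 1) / 2), (Nat.choose (k - i) (i + 1) : ℝ) * b ^ (k - 2 * i) * c ^ (i + 1) := by
    rcases Nat.even_or_odd k with ⟨m, rfl⟩ | ⟨m, rfl⟩
    · rw [show (m + m) / 2 + 1 = m + 1 by omega, show (m + m + 1) / 2 = m by omega,
        Finset.sum_range_succ, show m + m - m = m by omega,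
        Nat.choose_eq_zero_of_lt (by omega)]
      simp
    · rw [show (2 * m + 1) / 2 + 1 = m + 1 by omega, show (2 * m + 1 + 1) / 2 = m + 1 by omega]
  have hB : b * ∑ i ∈ Finset.range ((k + 1) / 2 + 1), (Nat.choose (k + 1 - i) i : ℝ) * b ^ (k + 1 - 2 * i) * c ^ i
      = b ^ (k + 2)
        + ∑ i ∈ Finset.range ((k + 1) / 2), (Nat.choose (k - i) (i + 1) : ℝ) * b ^ (k - 2 * i) * c ^ (i + 1) := by
    rw [Finset.mul_sum]
    have hterm : ∀ i ∈ Finset.range ((k + 1) / 2 + 1),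
        b * ((Nat.choose (k + 1 - i) i : ℝ) * b ^ (k + 1 - 2 * i) * c ^ i)
          = (Nat.choose (k + 1 - i) i : ℝ) * b ^ (k + 2 - 2 * i) * c ^ i := by
      intro i hi
      rw [Finset.mem_range] at hi
      have : k + 2 - 2 * i = (k + 1 - 2 * i) + 1 := by omega
      rw [this, pow_succ]
      ring
    rw [Finset.sum_congr rfl hterm, Finset.sum_range_succ']
    have hterm2 : ∀ i ∈ Finset.range ((k + 1) / 2),
        (Nat.choose (k + 1 - (i + 1)) (i + 1) : ℝ) * b ^ (k + 2 - 2 * (i + 1)) * c ^ (i + 1)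
          = (Nat.choose (k - i) (i + 1) : ℝ) * b ^ (k - 2 * i) * c ^ (i + 1) := by
      intro i hi
      rw [Finset.mem_range] at hi
      rw [show k + 1 - (i + 1) = k - i by omega, show k + 2 - 2 * (i + 1) = k - 2 * i by omega]
    rw [Finset.sum_congr rfl hterm2]
    simp only [Nat.sub_zero, Nat.mul_zero, Nat.choose_zero_right, Nat.cast_one, one_mul,
      pow_zero, mul_one]
    ring
  rw [hB, hC, hA]
  simp only [Nat.sub_zero, Nat.mul_zero, Nat.choose_zero_right, Nat.cast_one, one_mul,
    pow_zero, mul_one]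
  ring

theorem stmt_0 (b c : ℝ) (h : b ^ 2 + 4 * c > 0) (k : ℕ) :
    ∑ i ∈ Finset.range (k / 2 + 1), (Nat.choose (k - i) i : ℝ) * b ^ (k - 2 * i) * c ^ i =
      (1 / Real.sqrt (b ^ 2 + 4 * c)) *
        (((b + Real.sqrt (b ^ 2 + 4 * c)) / 2) ^ (k + 1) -
          ((b - Real.sqrt (b ^ 2 + 4 * c)) / 2) ^ (k + 1)) := by
  have hs : Real.sqrt (b ^ 2 + 4 * c) > 0 := Real.sqrt_pos.mpr h
  have hs2 : Real.sqrt (b ^ 2 + 4 * c) ^ 2 = b ^ 2 + 4 * c := Real.sq_sqrt h.le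
  set s := Real.sqrt (b ^ 2 + 4 * c) with hsdef
  have hα : ((b + s) / 2) ^ 2 = b * ((b + s) / 2) + c := by linear_combination hs2 / 4
  have hβ : ((b - s) / 2) ^ 2 = b * ((b - s) / 2) + c := by linear_combination hs2 / 4
  induction k using Nat.twoStepInduction with
  | zero =>
    norm_num [Finset.sum_range_one]
    field_simp
    ring
  | one =>
    norm_num [Finset.sum_range_one]
    field_simp
    ring
  | more k ih1 ih2 =>
    have key : ∀ x : ℝ, x ^ 2 = b * x + c → x ^ (k + 3) = b * x ^ (k + 2) + c * x ^ (k + 1) :=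
      fun x hx => by
        calc x ^ (k + 3) = x ^ (k + 1) * x ^ 2 := by ring
          _ = x ^ (k + 1) * (b * x + c) := by rw [hx]
          _ = b * x ^ (k + 2) + c * x ^ (k + 1) := by ring
    rw [sum_rec b c k, ih1, ih2]
    have hk1 := key ((b + s) / 2) hα
    have hk2 := key ((b - s) / 2) hβ
    set A := (b + s) / 2
    set B := (b - s) / 2
    clear_value A B
    linear_combination (hk2 - hk1) / s
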